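/- For every p : ℕ and every n : ℕ, the little p-Schröder number satisfies the closed form S p n = ∑_{k=0}^{n} Nat.choose (2n-k) k · C p (n-k), where C p m = p^(m+1) · Nat.catalan m is the m-th p-Catalan number. -/
import Mathlib

open Finset

private def pa (p m : ℕ) : ℕ := p ^ (m + 1) * catalan m

private def pT (p n : ℕ) : ℕ := ∑ m ∈ range (n + 1), (n + m).choose (2 * m) * pa p m

private lemma pa_succ (p m : ℕ) :
    pa p (m + 1) = ∑ i ∈ range (m + 1), pa p i * pa p (m - i) := by
  unfold pa
  rw [catalan_succ', Finset.Nat.sum_antidiagonal_eq_sum_range_succ_mk, Finset.mul_sum]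
  refine Finset.sum_congr rfl fun i hi => ?_
  have him : i ≤ m := Nat.lt_succ_iff.mp (Finset.mem_range.mp hi)
  have h : (i + 1) + (m - i + 1) = m + 1 + 1 := by omega
  rw [← h, pow_add]; ring

private lemma vand (s : ℕ) : ∀ n r : ℕ,
    ∑ k ∈ range (n + 1), k.choose r * (n - k).choose s = (n + 1).choose (r + s + 1) := by
  intro n
  induction n with
  | zero =>
    intro r
    rcases r with _ | r <;> rcases s with _ | s <;>
      simp [Nat.choose_eq_zero_of_lt, Nat.choose_one_right]
  | succ n ih =>
    intro r
    rw [Finset.sum_range_succ']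
    rcases r with _ | r
    · have h0 : ∀ i ∈ range (n + 1), (i + 1).choose 0 * (n + 1 - (i + 1)).choose s
          = i.choose 0 * (n - i).choose s := by
        intro i _; simp
      rw [Finset.sum_congr rfl h0, ih 0]
      simp only [Nat.choose_zero_right, Nat.one_mul, Nat.zero_add, Nat.sub_zero]
      rw [Nat.choose_succ_succ' (n + 1) s]
      omega
    · have h0 : ∀ i ∈ range (n + 1), (i + 1).choose (r + 1) * (n + 1 - (i + 1)).choose s
          = i.choose r * (n - i).choose s + i.choose (r + 1) * (n - i).choose s := by
        intro i _
        have e : n + 1 - (i + 1) = n - i := by omega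
        rw [e, Nat.choose_succ_succ, Nat.add_mul]
      rw [Finset.sum_congr rfl h0, Finset.sum_add_distrib, ih r, ih (r + 1)]
      have : (0 : ℕ).choose (r + 1) = 0 := by simp
      rw [this, Nat.zero_mul, Nat.add_zero]
      have e : r + 1 + s + 1 = r + s + 1 + 1 := by omega
      rw [e, Nat.choose_succ_succ' (n + 1) (r + s + 1)]

private lemma vand' (i j n : ℕ) :
    ∑ k ∈ range (n + 1), (k + i).choose (2 * i) * ((n - k) + j).choose (2 * j)
      = (n + i + j + 1).choose (2 * i + 2 * j + 1) := by
  have key : ∑ k ∈ range (n + i + j + 1), k.choose (2 * i) * ((n + i + j) - k).choose (2 * j)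
      = (n + i + j + 1).choose (2 * i + 2 * j + 1) := vand (2 * j) (n + i + j) (2 * i)
  rw [← key]
  rw [show (∑ k ∈ range (n + i + j + 1), k.choose (2 * i) * ((n + i + j) - k).choose (2 * j))
      = ∑ k ∈ Ico i (n + 1 + i), k.choose (2 * i) * ((n + i + j) - k).choose (2 * j) from ?_]
  · rw [Finset.sum_Ico_eq_sum_range]
    have : n + 1 + i - i = n + 1 := by omega
    rw [this]
    refine Finset.sum_congr rfl fun k hk => ?_
    have hk' : k ≤ n := Nat.lt_succ_iff.mp (Finset.mem_range.mp hk)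
    rw [Nat.add_comm i k]
    congr 1
    congr 1
    omega
  · symm
    apply Finset.sum_subset
    · intro x hx
      simp only [Finset.mem_Ico] at hx
      simp only [Finset.mem_range]
      omega
    · intro x hx hx'
      simp only [Finset.mem_range] at hx
      simp only [Finset.mem_Ico, not_and, not_lt] at hx'
      rcases Nat.lt_or_ge x i with h | h
      · rw [Nat.choose_eq_zero_of_lt (by omega), Nat.zero_mul]
      · have : n + 1 + i ≤ x := hx' h
        rw [Nat.choose_eq_zero_of_lt (show n + i + j - x < 2 * j by omega), Nat.mul_zero]

private lemma pT_extend (p n k : ℕ) (hk : k ≤ n) :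
    pT p k = ∑ i ∈ range (n + 1), (k + i).choose (2 * i) * pa p i := by
  unfold pT
  apply Finset.sum_subset
  · intro x hx; simp only [Finset.mem_range] at *; omega
  · intro x hx hx'
    simp only [Finset.mem_range, not_lt] at hx hx'
    rw [Nat.choose_eq_zero_of_lt (by omega), Nat.zero_mul]

private lemma pT_rec (p n : ℕ) :
    pT p (n + 1) = pT p n + ∑ k ∈ range (n + 1), pT p k * pT p (n - k) := by
  have conv_eq : ∑ k ∈ range (n + 1), pT p k * pT p (n - k)
      = ∑ m ∈ range (n + 1), (n + m + 1).choose (2 * m + 1) * pa p (m + 1) := by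
    have step1 : ∑ k ∈ range (n + 1), pT p k * pT p (n - k)
        = ∑ i ∈ range (n + 1), ∑ j ∈ range (n + 1),
            (n + (i + j) + 1).choose (2 * (i + j) + 1) * (pa p i * pa p j) := by
      have h1 : ∀ k ∈ range (n + 1), pT p k * pT p (n - k)
          = ∑ i ∈ range (n + 1), ∑ j ∈ range (n + 1),
              ((k + i).choose (2 * i) * ((n - k) + j).choose (2 * j)) * (pa p i * pa p j) := by
        intro k hk
        have hk' : k ≤ n := Nat.lt_succ_iff.mp (Finset.mem_range.mp hk)
        rw [pT_extend p n k hk', pT_extend p n (n - k) (by omega), Finset.sum_mul_sum]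
        refine Finset.sum_congr rfl fun i _ => Finset.sum_congr rfl fun j _ => ?_
        ring
      rw [Finset.sum_congr rfl h1, Finset.sum_comm]
      refine Finset.sum_congr rfl fun i _ => ?_
      rw [Finset.sum_comm]
      refine Finset.sum_congr rfl fun j _ => ?_
      rw [← Finset.sum_mul, vand' i j n]
      congr 2 <;> omega
    rw [step1]
    have step2 : ∀ i ∈ range (n + 1),
        (∑ j ∈ range (n + 1), (n + (i + j) + 1).choose (2 * (i + j) + 1) * (pa p i * pa p j))
        = ∑ j ∈ range (n + 1 - i), (n + (i + j) + 1).choose (2 * (i + j) + 1) * (pa p i * pa p j) := by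
      intro i hi
      symm
      apply Finset.sum_subset
      · intro x hx; simp only [Finset.mem_range] at *; omega
      · intro x hx hx'
        simp only [Finset.mem_range, not_lt] at hx hx'
        rw [Nat.choose_eq_zero_of_lt (by omega), Nat.zero_mul]
    rw [Finset.sum_congr rfl step2]
    rw [← Finset.sum_range_diag_flip (n + 1)
      (fun i j => (n + (i + j) + 1).choose (2 * (i + j) + 1) * (pa p i * pa p j))]
    refine Finset.sum_congr rfl fun m hm => ?_
    have hm' : m ≤ n := Nat.lt_succ_iff.mp (Finset.mem_range.mp hm)
    have h2 : ∀ i ∈ range (m + 1),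
        (n + (i + (m - i)) + 1).choose (2 * (i + (m - i)) + 1) * (pa p i * pa p (m - i))
        = (n + m + 1).choose (2 * m + 1) * (pa p i * pa p (m - i)) := by
      intro i hi
      have : i + (m - i) = m := by
        have := Nat.lt_succ_iff.mp (Finset.mem_range.mp hi); omega
      rw [this]
    rw [Finset.sum_congr rfl h2, ← Finset.mul_sum, ← pa_succ]
  rw [conv_eq]
  -- Now pure identity about pT
  unfold pT
  rw [Finset.sum_range_succ' (fun m => (n + 1 + m).choose (2 * m) * pa p m) (n + 1),
      Finset.sum_range_succ' (fun m => (n + m).choose (2 * m) * pa p m) n]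
  simp only [Nat.mul_zero, Nat.choose_zero_right, Nat.one_mul]
  have hzero : (n + (n + 1)).choose (2 * (n + 1)) * pa p (n + 1) = 0 := by
    rw [Nat.choose_eq_zero_of_lt (by omega), Nat.zero_mul]
  have hext : ∑ m ∈ range n, (n + (m + 1)).choose (2 * (m + 1)) * pa p (m + 1)
      = ∑ m ∈ range (n + 1), (n + (m + 1)).choose (2 * (m + 1)) * pa p (m + 1) := by
    rw [Finset.sum_range_succ, hzero, Nat.add_zero]
  rw [hext, Nat.add_assoc, Nat.add_comm (pa p 0), ← Nat.add_assoc, ← Finset.sum_add_distrib]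
  have hcomb : ∀ m ∈ range (n + 1),
      (n + (m + 1)).choose (2 * (m + 1)) * pa p (m + 1)
        + (n + m + 1).choose (2 * m + 1) * pa p (m + 1)
      = (n + 1 + (m + 1)).choose (2 * (m + 1)) * pa p (m + 1) := by
    intro m _
    rw [← Nat.add_mul]
    congr 1
    have := Nat.choose_succ_succ' (n + m + 1) (2 * m + 1)
    have e1 : n + 1 + (m + 1) = n + m + 1 + 1 := by omega
    have e2 : 2 * (m + 1) = 2 * m + 1 + 1 := by omega
    rw [e1, e2, this]
    have e3 : n + (m + 1) = n + m + 1 := by omega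
    rw [e3]
    omega
  rw [Finset.sum_congr rfl hcomb]

private lemma pT_form (p n : ℕ) :
    ∑ k ∈ range (n + 1), Nat.choose (2 * n - k) k * (p ^ (n - k + 1) * catalan (n - k))
      = pT p n := by
  unfold pT
  rw [← Finset.sum_range_reflect (fun m => (n + m).choose (2 * m) * pa p m) (n + 1)]
  refine Finset.sum_congr rfl fun k hk => ?_
  have hk' : k ≤ n := Nat.lt_succ_iff.mp (Finset.mem_range.mp hk)
  have e1 : n + 1 - 1 - k = n - k := by omega
  rw [e1]
  unfold pa
  congr 1
  have e2 : 2 * n - k = n + (n - k) := by omega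
  rw [e2]
  have := Nat.choose_symm (show 2 * (n - k) ≤ n + (n - k) by omega)
  rw [show n + (n - k) - 2 * (n - k) = k by omega] at this
  exact this

theorem stmt9 (p : ℕ) (S : ℕ → ℕ) (hS0 : S 0 = p)
    (hS : ∀ n : ℕ, S (n + 1) = S n + ∑ k ∈ Finset.range (n + 1), S k * S (n - k))
    (n : ℕ) :
    S n = ∑ k ∈ Finset.range (n + 1),
      Nat.choose (2 * n - k) k * (p ^ (n - k + 1) * catalan (n - k)) := by
  have main : ∀ n, S n = pT p n := by
    intro n
    induction n using Nat.strong_induction_on with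
    | _ n ih =>
      rcases n with _ | n
      · simp [pT, pa, hS0]
      · rw [hS n, pT_rec, ih n (by omega)]
        congr 1
        refine Finset.sum_congr rfl fun k hk => ?_
        have hk' : k ≤ n := Nat.lt_succ_iff.mp (Finset.mem_range.mp hk)
        rw [ih k (by omega), ih (n - k) (by omega)]
  rw [main n, pT_form]
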